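/- Let (v_t : L ⊗ E_t → L) be a left dilation of a product system of Hilbert spaces E^⊗. Then ϑ_t(a) := v_t(a ⊗ id_{E_t})v_t* defines an E_0-semigroup on B(L): each ϑ_t is a unital *-endomorphism and ϑ_s ∘ ϑ_t = ϑ_{s+t}. -/

import Mathlib

open scoped InnerProductSpace NNReal
set_option synthInstance.maxHeartbeats 1000000
set_option maxHeartbeats 1000000

/-- **A left dilation induces an E₀-semigroup on `B(L)`.**
Let `(E t)` be a product system of Hilbert spaces (multiplications `m`) and
`(v t : L ⊗ E t → L)` a left dilation.  Then `ϑ t (a) := v t (a ⊗ id) (v t)*`,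
characterized by `ϑ t a (v t (x ⊗ y)) = v t (a x ⊗ y)`, is an E₀-semigroup on
`B(L)`: each `ϑ t` is a unital *-endomorphism, and `ϑ s ∘ ϑ t = ϑ (s + t)`. -/
theorem left_dilation_induces_E0_semigroup
    (E : ℝ≥0 → Type*) [∀ t, NormedAddCommGroup (E t)] [∀ t, InnerProductSpace ℂ (E t)]
    (m : ∀ s t, E s → E t → E (s + t))
    (hm_lin : ∀ s t (x : E s), IsLinearMap ℂ (m s t x))
    (hm_lin' : ∀ s t (y : E t), IsLinearMap ℂ (fun x => m s t x y))
    (hm_iso : ∀ s t (x x' : E s) (y y' : E t),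
      ⟪m s t x y, m s t x' y'⟫_ℂ = ⟪x, x'⟫_ℂ * ⟪y, y'⟫_ℂ)
    (hm_dense : ∀ s t, Dense (↑(Submodule.span ℂ
      {z : E (s + t) | ∃ x y, m s t x y = z}) : Set (E (s + t))))
    (hm_assoc : ∀ r s t (x : E r) (y : E s) (z : E t),
      cast (congrArg E (add_assoc r s t)) (m (r + s) t (m r s x y) z)
        = m r (s + t) x (m s t y z))
    (one : E 0) (hone : ⟪one, one⟫_ℂ = 1)
    (honedim : ∀ x : E 0, x = ⟪one, x⟫_ℂ • one)     -- `E 0 = ℂ`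
    (hu00 : cast (congrArg E (zero_add (0 : ℝ≥0))) (m 0 0 one one) = one)
    (L : Type*) [NormedAddCommGroup L] [InnerProductSpace ℂ L] [CompleteSpace L]
    (hL : ∃ x : L, x ≠ 0)
    (v : ∀ t, L → E t → L)
    (hv_lin : ∀ t (x : L), IsLinearMap ℂ (v t x))
    (hv_lin' : ∀ t (y : E t), IsLinearMap ℂ (fun x => v t x y))
    (hv_iso : ∀ t (x x' : L) (y y' : E t),
      ⟪v t x y, v t x' y'⟫_ℂ = ⟪x, x'⟫_ℂ * ⟪y, y'⟫_ℂ)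
    (hv_dense : ∀ t, Dense (↑(Submodule.span ℂ {z : L | ∃ x y, v t x y = z}) : Set L))
    (hv_assoc : ∀ s t (x : L) (ys : E s) (yt : E t),
      v t (v s x ys) yt = v (s + t) x (m s t ys yt))
    -- `ϑ t a = v t (a ⊗ id_{E t}) (v t)*`
    (ϑ : ∀ _ : ℝ≥0, (L →L[ℂ] L) → (L →L[ℂ] L))
    (hϑ : ∀ t (a : L →L[ℂ] L) (x : L) (y : E t), ϑ t a (v t x y) = v t (a x) y) :
    (∀ t, ϑ t 1 = 1) ∧
    (∀ t (a b : L →L[ℂ] L), ϑ t (a + b) = ϑ t a + ϑ t b) ∧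
    (∀ t (c : ℂ) (a : L →L[ℂ] L), ϑ t (c • a) = c • ϑ t a) ∧
    (∀ t (a b : L →L[ℂ] L), ϑ t (a * b) = ϑ t a * ϑ t b) ∧
    (∀ t (a : L →L[ℂ] L), ϑ t (star a) = star (ϑ t a)) ∧
    (∀ s t (a : L →L[ℂ] L), ϑ s (ϑ t a) = ϑ (t + s) a) := by

  -- two operators agreeing on the range of `v t` are equal
  have extL : ∀ (t : ℝ≥0) (f g : L →L[ℂ] L),
      (∀ x y, f (v t x y) = g (v t x y)) → f = g := by
    intro t f g h
    refine ContinuousLinearMap.ext_on (hv_dense t) ?_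
    rintro z ⟨x, y, rfl⟩
    exact h x y
  -- `z ↦ v u x z` as a continuous linear map
  have hnorm : ∀ (u : ℝ≥0) (x : L) (z : E u), ‖v u x z‖ = ‖x‖ * ‖z‖ := by
    intro u x z
    have h := hv_iso u x x z z
    rw [inner_self_eq_norm_sq_to_K, inner_self_eq_norm_sq_to_K,
      inner_self_eq_norm_sq_to_K] at h
    have h' : ‖v u x z‖ ^ 2 = (‖x‖ * ‖z‖) ^ 2 := by
      rw [mul_pow]; exact_mod_cast h
    have := congrArg Real.sqrt h'
    rwa [Real.sqrt_sq (norm_nonneg _),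
      Real.sqrt_sq (mul_nonneg (norm_nonneg _) (norm_nonneg _))] at this
  have vCLM : ∀ (u : ℝ≥0) (x : L), ∃ f : E u →L[ℂ] L, ∀ z, f z = v u x z := by
    intro u x
    refine ⟨LinearMap.mkContinuous (IsLinearMap.mk' _ (hv_lin u x)) ‖x‖ ?_, fun z => rfl⟩
    intro z
    rw [IsLinearMap.mk'_apply, hnorm]
  -- density of the span of doubly factorized vectors
  have dense2 : ∀ (s t : ℝ≥0),
      Dense (↑(Submodule.span ℂ
        {w : L | ∃ x ys yt, v t (v s x ys) yt = w}) : Set L) := by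
    intro s t
    set S := {w : L | ∃ x ys yt, v t (v s x ys) yt = w} with hS
    set C := (Submodule.span ℂ S).topologicalClosure with hCdef
    have hCclosed : IsClosed (C : Set L) := Submodule.isClosed_topologicalClosure _
    have hspanle : Submodule.span ℂ S ≤ C := Submodule.le_topologicalClosure _
    have hmem : ∀ (x : L) (z : E (s + t)), v (s + t) x z ∈ C := by
      intro x z
      obtain ⟨f, hf⟩ := vCLM (s + t) x
      have hDc : IsClosed ((Submodule.comap (f : E (s + t) →ₗ[ℂ] L) C :
          Submodule ℂ (E (s + t))) : Set (E (s + t))) :=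
        hCclosed.preimage f.continuous
      have hsp : Submodule.span ℂ {z : E (s + t) | ∃ a b, m s t a b = z} ≤
          Submodule.comap (f : E (s + t) →ₗ[ℂ] L) C := by
        rw [Submodule.span_le]
        rintro _ ⟨a, b, rfl⟩
        show f (m s t a b) ∈ C
        rw [hf, ← hv_assoc s t x a b]
        exact hspanle (Submodule.subset_span ⟨x, a, b, rfl⟩)
      have huniv : ((Submodule.comap (f : E (s + t) →ₗ[ℂ] L) C :
          Submodule ℂ (E (s + t))) : Set (E (s + t))) = Set.univ := by
        apply Set.eq_univ_of_univ_subset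
        calc Set.univ = closure (↑(Submodule.span ℂ
              {z : E (s + t) | ∃ a b, m s t a b = z}) : Set (E (s + t))) :=
            ((hm_dense s t).closure_eq).symm
          _ ⊆ _ := closure_minimal hsp hDc
      have hz : z ∈ ((Submodule.comap (f : E (s + t) →ₗ[ℂ] L) C :
          Submodule ℂ (E (s + t))) : Set (E (s + t))) :=
        Set.eq_univ_iff_forall.1 huniv z
      have : f z ∈ C := hz
      rwa [hf] at this
    have hCtop : C = ⊤ := by
      rw [Submodule.eq_top_iff']
      intro w
      have hsub : Submodule.span ℂ {w : L | ∃ x z, v (s + t) x z = w} ≤ C := by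
        rw [Submodule.span_le]
        rintro _ ⟨x, z, rfl⟩
        exact hmem x z
      have : (C : Set L) = Set.univ := by
        apply Set.eq_univ_of_univ_subset
        calc Set.univ = closure (↑(Submodule.span ℂ
              {w : L | ∃ x z, v (s + t) x z = w}) : Set L) :=
            ((hv_dense (s + t)).closure_eq).symm
          _ ⊆ (C : Set L) := closure_minimal hsub hCclosed
      exact Set.eq_univ_iff_forall.1 this w
    rw [dense_iff_closure_eq]
    have : closure (↑(Submodule.span ℂ S) : Set L) = (C : Set L) :=
      (Submodule.topologicalClosure_coe _).symm
    rw [this, hCtop]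
    rfl
  have extL2 : ∀ (s t : ℝ≥0) (f g : L →L[ℂ] L),
      (∀ x ys yt, f (v t (v s x ys) yt) = g (v t (v s x ys) yt)) → f = g := by
    intro s t f g h
    refine ContinuousLinearMap.ext_on (dense2 s t) ?_
    rintro z ⟨x, ys, yt, rfl⟩
    exact h x ys yt
  refine ⟨?_, ?_, ?_, ?_, ?_, ?_⟩
  · intro t
    refine extL t _ _ fun x y => ?_
    simp [hϑ]
  · intro t a b
    refine extL t _ _ fun x y => ?_
    simp only [hϑ, ContinuousLinearMap.add_apply]
    rw [(hv_lin' t y).map_add]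
  · intro t c a
    refine extL t _ _ fun x y => ?_
    simp only [hϑ, ContinuousLinearMap.smul_apply]
    rw [(hv_lin' t y).map_smul]
  · intro t a b
    refine extL t _ _ fun x y => ?_
    simp [hϑ, ContinuousLinearMap.mul_apply]
  · intro t a
    refine extL t _ _ fun x y => ?_
    rw [hϑ]
    have key : ∀ z, ⟪v t (star a x) y, z⟫_ℂ = ⟪star (ϑ t a) (v t x y), z⟫_ℂ := by
      have heq : innerSL ℂ (v t (star a x) y) = innerSL ℂ (star (ϑ t a) (v t x y)) := by
        refine ContinuousLinearMap.ext_on (hv_dense t) ?_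
        rintro z ⟨x', y', rfl⟩
        simp only [innerSL_apply_apply]
        rw [hv_iso, ContinuousLinearMap.star_eq_adjoint,
          ContinuousLinearMap.adjoint_inner_left, ContinuousLinearMap.star_eq_adjoint,
          ContinuousLinearMap.adjoint_inner_left, hϑ, hv_iso]
      intro z
      exact DFunLike.congr_fun heq z
    exact ext_inner_right ℂ key
  · intro s t a
    refine extL2 t s _ _ fun x ys yt => ?_
    rw [hϑ, hϑ, hv_assoc t s x ys yt, hϑ, ← hv_assoc t s (a x) ys yt]
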